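/- Let q ≥ 3 and Δ ≥ 3 be integers, set d = Δ−1, and let B be a real parameter with 0 ≤ B < 1 and B ≥ (Δ−q)/Δ. Then every positive solution (R₁,…,R_q, C₁,…,C_q, λ, μ) of the Potts tree recursions satisfies R₁ = R₂ = ⋯ = R_q and C₁ = C₂ = ⋯ = C_q. -/

import Mathlib

/-- An AM-GM type bound: for nonnegative `z, x`,
`(d+1)^(d+1) * z * x^d ≤ d^d * (z+x)^(d+1)`. -/
lemma potts_amgm (d : ℕ) (hd : 1 ≤ d) (z x : ℝ) (hz : 0 ≤ z) (hx : 0 ≤ x) :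
    ((d:ℝ)+1)^(d+1) * (z * x^d) ≤ (d:ℝ)^d * (z+x)^(d+1) := by
  obtain ⟨e, rfl⟩ : ∃ e, d = e + 1 := ⟨d - 1, by omega⟩
  set D : ℝ := ((e:ℝ) + 1) with hD
  have hD0 : 0 < D := by positivity
  rcases eq_or_lt_of_le hx with h0 | hx0
  · have : x = 0 := h0.symm
    subst this
    have : z * 0 ^ (e+1) = 0 := by simp
    rw [this, mul_zero]
    positivity
  · set a : ℝ := (D*z - x)/((D+1)*x) with ha
    have hden : 0 < (D+1)*x := by positivity
    have ha2 : -2 ≤ a := by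
      rw [ha, le_div_iff₀ hden]
      nlinarith [mul_nonneg hD0.le hz, mul_nonneg hD0.le hx0.le]
    have hbern := one_add_mul_le_pow ha2 (e+1)
    have hkey : (1 + a) * ((D+1)*x) = D*(z+x) := by
      rw [ha, add_mul, div_mul_cancel₀ _ hden.ne']
      ring
    have hxne : x ≠ 0 := ne_of_gt hx0
    have h2 : (1 + ((e:ℝ)+1) * a) * ((D+1)*x)^(e+1) ≤ (D*(z+x))^(e+1) := by
      calc (1 + ((e:ℝ)+1) * a) * ((D+1)*x)^(e+1)
          ≤ (1+a)^(e+1) * ((D+1)*x)^(e+1) :=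
            mul_le_mul_of_nonneg_right (by simpa using hbern) (by positivity)
        _ = ((1+a) * ((D+1)*x))^(e+1) := (mul_pow _ _ _).symm
        _ = (D*(z+x))^(e+1) := by rw [hkey]
    have h3 : (1 + ((e:ℝ)+1) * a) * ((D+1)*x)^(e+1)
        = ((D+1)*x)^(e+1) + D * (D*z - x) * ((D+1)*x)^e := by
      have hsplit : ((D+1)*x)^(e+1) = ((D+1)*x)^e * ((D+1)*x) := by ring
      rw [ha, hsplit]
      field_simp
      ring
    have h4 : ((D+1)*x)^(e+1) + D * (D*z - x) * ((D+1)*x)^e ≤ (D*(z+x))^(e+1) := by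
      rw [← h3]; exact h2
    have hzx : (0:ℝ) ≤ z + x := by positivity
    have h5 : (z+x) * (((D+1)*x)^(e+1) + D * (D*z - x) * ((D+1)*x)^e)
        ≤ (z+x) * (D*(z+x))^(e+1) := mul_le_mul_of_nonneg_left h4 hzx
    have h6 : (z+x) * (((D+1)*x)^(e+1) + D * (D*z - x) * ((D+1)*x)^e)
        = ((D+1)*x)^e * ((z+x) * (x + D^2*z)) := by
      rw [pow_succ]
      ring
    have h7 : (D+1)^2 * (z*x) ≤ (z+x) * (x + D^2*z) := by nlinarith [sq_nonneg (x - D*z)]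
    have h8 : ((D+1)*x)^e * ((D+1)^2 * (z*x)) ≤ (z+x) * (D*(z+x))^(e+1) := by
      calc ((D+1)*x)^e * ((D+1)^2 * (z*x)) ≤ ((D+1)*x)^e * ((z+x) * (x + D^2*z)) :=
            mul_le_mul_of_nonneg_left h7 (by positivity)
        _ ≤ (z+x) * (D*(z+x))^(e+1) := by rw [← h6]; exact h5
    have hcast : ((e+1:ℕ):ℝ) = D := by push_cast [hD]; ring
    rw [hcast]
    calc (D+1)^(e+1+1) * (z * x^(e+1)) = ((D+1)*x)^e * ((D+1)^2 * (z*x)) := by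
          rw [mul_pow]; ring
      _ ≤ (z+x) * (D*(z+x))^(e+1) := h8
      _ = D^(e+1) * (z+x)^(e+1+1) := by rw [mul_pow]; ring

/-- Strict power-mean (Jensen) bound used for both sides of the recursion. -/
lemma potts_jensen (q : ℕ) (hq : 3 ≤ q) (e : ℕ) (lam Qv S T : ℝ) (hlam : 0 < lam)
    (a : Fin q → ℝ) (ha0 : ∀ i, 0 < a i)
    (hsa : ∑ i, a i = Qv * S)
    (hTsum : T = lam * ∑ i, (a i)^(e+2))
    (i₀ i₁ : Fin q) (hane : a i₀ ≠ a i₁) :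
    lam * (Qv^(e+2) * S^(e+2)) * q < (q:ℝ)^(e+2) * T := by
  have hq0 : (0:ℝ) < q := by exact_mod_cast (by omega : 0 < q)
  have hJ := (strictConvexOn_pow (n := e+2) (by omega)).map_sum_lt
    (t := Finset.univ) (w := fun _ : Fin q => (1:ℝ)/q) (p := a)
    (fun i _ => by positivity)
    (by simp [Finset.card_univ]; field_simp)
    (fun i _ => (ha0 i).le)
    ⟨i₀, Finset.mem_univ _, i₁, Finset.mem_univ _, hane⟩
  simp only [smul_eq_mul] at hJ
  rw [← Finset.mul_sum, hsa] at hJ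
  rw [← Finset.mul_sum] at hJ
  have hA1 : 0 < ∑ i, (a i)^(e+2) :=
    Finset.sum_pos (fun i _ => pow_pos (ha0 i) _) ⟨i₀, Finset.mem_univ _⟩
  have h2 : (Qv*S)^(e+2) / (q:ℝ)^(e+2) < (∑ i, (a i)^(e+2)) / q := by
    calc (Qv*S)^(e+2) / (q:ℝ)^(e+2) = ((1:ℝ)/q * (Qv*S))^(e+2) := by
          rw [mul_pow, mul_pow, div_pow]; ring
      _ < (1:ℝ)/q * ∑ i, (a i)^(e+2) := hJ
      _ = (∑ i, (a i)^(e+2)) / q := by ring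
  rw [div_lt_div_iff₀ (by positivity) hq0] at h2
  calc lam * (Qv^(e+2) * S^(e+2)) * q = lam * ((Qv*S)^(e+2) * q) := by rw [mul_pow]; ring
    _ < lam * ((∑ i, (a i)^(e+2)) * (q:ℝ)^(e+2)) := by
        apply mul_lt_mul_of_pos_left _ hlam
        exact h2
    _ = (q:ℝ)^(e+2) * T := by rw [hTsum]; ring


/-- Mean value step: a scalar fixed-point function with two fixed points forces
derivative one somewhere in between. -/
lemma potts_mvt (e : ℕ) (lam mu E S T p r : ℝ) (hpr : p < r)
    (hfixp : lam * (S - E * (mu * (T - E*p)^(e+2)))^(e+2) = p)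
    (hfixr : lam * (S - E * (mu * (T - E*r)^(e+2)))^(e+2) = r) :
    ∃ ξ ∈ Set.Ioo p r,
      ((e:ℝ)+2)^2 * E^2 * lam * mu *
        ((S - E * (mu * (T - E*ξ)^(e+2)))^(e+1) * (T - E*ξ)^(e+1)) = 1 := by
  set Φ : ℝ → ℝ := fun t => lam * (S - E * (mu * (T - E*t)^(e+2)))^(e+2) with hΦdef
  set Φ' : ℝ → ℝ := fun t => ((e:ℝ)+2)^2 * E^2 * lam * mu *
      ((S - E * (mu * (T - E*t)^(e+2)))^(e+1) * (T - E*t)^(e+1)) with hΦ'def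
  have hderiv : ∀ t : ℝ, HasDerivAt Φ (Φ' t) t := by
    intro t
    have h1 : HasDerivAt (fun u : ℝ => T - E*u) (-E) t := by
      simpa using ((hasDerivAt_id t).const_mul E).const_sub T
    have h2 := h1.pow (e+2)
    have h3 := (h2.const_mul mu).const_mul E
    have h4 := (hasDerivAt_const t S).sub h3
    have h5 := (h4.pow (e+2)).const_mul lam
    have hexp : e + 2 - 1 = e + 1 := by omega
    rw [hexp] at h2 h5
    refine HasDerivAt.congr_deriv h5 ?_
    simp only [hΦ'def, Pi.sub_apply, Pi.pow_apply]
    push_cast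
    ring
  obtain ⟨ξ, hmem, hsl⟩ := exists_hasDerivAt_eq_slope Φ Φ' hpr
    (fun x _ => (hderiv x).continuousAt.continuousWithinAt) (fun x _ => hderiv x)
  refine ⟨ξ, hmem, ?_⟩
  have hone : Φ' ξ = 1 := by
    rw [hsl]
    show (Φ r - Φ p) / (r - p) = 1
    have e1 : Φ r = r := hfixr
    have e2 : Φ p = p := hfixp
    rw [e1, e2]
    exact div_self (by linarith)
  simpa [hΦ'def] using hone

/-- Final numeric combination. -/
lemma potts_final (e : ℕ) (D E3 E lam mu aa bb S T Q q' : ℝ)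
    (hD0 : 0 < D) (hE30 : 0 < E3) (hE0 : 0 < E) (hlam : 0 < lam) (hmu : 0 < mu)
    (haa : 0 < aa) (hbb : 0 < bb) (hS0 : 0 < S) (hT0 : 0 < T) (hQ0 : 0 < Q) (hq0 : 0 < q')
    (hI : E3^(e+3) * (E*mu*(aa^(e+2)*bb^(e+2))) ≤ D^(e+2) * S^(e+3))
    (hA : lam * (Q^(e+2) * S^(e+2)) * q' < q'^(e+2) * T)
    (hB : mu * (Q^(e+2) * T^(e+2)) * q' < q'^(e+2) * S)
    (hth : D * q' ≤ E3 * Q)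
    (hEq3 : E3 * E ≤ q') :
    (D^2 * E^2 * lam * mu * (aa*bb)^(e+1))^(e+2) < 1 := by
  have h1 : (E3^(e+3) * (E*mu*(aa^(e+2)*bb^(e+2))))^(e+1) ≤ (D^(e+2) * S^(e+3))^(e+1) :=
    pow_le_pow_left₀ (by positivity) hI (e+1)
  have h2 : (lam * (Q^(e+2) * S^(e+2)) * q')^(e+2) < ((q':ℝ)^(e+2) * T)^(e+2) :=
    pow_lt_pow_left₀ hA (by positivity) (by omega)
  have h4 : (D*q')^((e+2)*(e+3)) ≤ (E3*Q)^((e+2)*(e+3)) :=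
    pow_le_pow_left₀ (by positivity) hth _
  have h5 : (E3*E)^(e+3) ≤ (q':ℝ)^(e+3) := pow_le_pow_left₀ (by positivity) hEq3 _
  have hstrict : (lam * (Q^(e+2) * S^(e+2)) * q')^(e+2) * (mu * (Q^(e+2) * T^(e+2)) * q')
      < ((q':ℝ)^(e+2) * T)^(e+2) * ((q':ℝ)^(e+2) * S) :=
    mul_lt_mul'' h2 hB (by positivity) (by positivity)
  have hns : (E3^(e+3) * (E*mu*(aa^(e+2)*bb^(e+2))))^(e+1) * (D*q')^((e+2)*(e+3)) * (E3*E)^(e+3)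
      ≤ (D^(e+2) * S^(e+3))^(e+1) * (E3*Q)^((e+2)*(e+3)) * (q':ℝ)^(e+3) :=
    mul_le_mul (mul_le_mul h1 h4 (by positivity) (by positivity)) h5 (by positivity) (by positivity)
  have htotal :
      ((E3^(e+3) * (E*mu*(aa^(e+2)*bb^(e+2))))^(e+1) * (D*q')^((e+2)*(e+3)) * (E3*E)^(e+3))
        * ((lam * (Q^(e+2) * S^(e+2)) * q')^(e+2) * (mu * (Q^(e+2) * T^(e+2)) * q'))
      < ((D^(e+2) * S^(e+3))^(e+1) * (E3*Q)^((e+2)*(e+3)) * (q':ℝ)^(e+3))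
        * (((q':ℝ)^(e+2) * T)^(e+2) * ((q':ℝ)^(e+2) * S)) :=
    mul_lt_mul' hns hstrict (by positivity) (by positivity)
  set G : ℝ := D^((e+2)*(e+1)) * E3^((e+2)*(e+3)) * S^((e+2)*(e+2)) * T^(e+2)
      * Q^((e+2)*(e+3)) * q'^(e*e+6*e+9) with hG
  have hG0 : 0 < G := by positivity
  have hL : ((E3^(e+3) * (E*mu*(aa^(e+2)*bb^(e+2))))^(e+1) * (D*q')^((e+2)*(e+3)) * (E3*E)^(e+3))
        * ((lam * (Q^(e+2) * S^(e+2)) * q')^(e+2) * (mu * (Q^(e+2) * T^(e+2)) * q'))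
      = (D^2 * E^2 * lam * mu * (aa*bb)^(e+1))^(e+2) * G := by
    rw [hG]; ring
  have hRg : ((D^(e+2) * S^(e+3))^(e+1) * (E3*Q)^((e+2)*(e+3)) * (q':ℝ)^(e+3))
        * (((q':ℝ)^(e+2) * T)^(e+2) * ((q':ℝ)^(e+2) * S)) = G := by
    rw [hG]; ring
  rw [hL, hRg] at htotal
  exact (mul_lt_iff_lt_one_left hG0).mp htotal

/-- in the uniqueness regime B ≥ (Δ−q)/Δ, every positive solution
of the antiferromagnetic Potts tree recursions is constant. -/
theorem potts_semi_translation_uniqueness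
    (q Δ : ℕ) (hq : 3 ≤ q) (hΔ : 3 ≤ Δ)
    (B : ℝ) (hB0 : 0 ≤ B) (hB1 : B < 1) (hBc : ((Δ : ℝ) - q) / Δ ≤ B)
    (R C : Fin q → ℝ) (lam mu : ℝ)
    (hR : ∀ i, 0 < R i) (hC : ∀ j, 0 < C j)
    (hlam : 0 < lam) (hmu : 0 < mu)
    (hrecR : ∀ i, R i = lam * (B * C i + ((∑ j, C j) - C i)) ^ (Δ - 1))
    (hrecC : ∀ j, C j = mu * (B * R j + ((∑ i, R i) - R j)) ^ (Δ - 1)) :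
    (∀ i j, R i = R j) ∧ (∀ i j, C i = C j) := by
  obtain ⟨e, hΔ3⟩ : ∃ e, Δ = e + 3 := ⟨Δ - 3, by omega⟩
  subst hΔ3
  have hd1 : (e + 3) - 1 = e + 2 := by omega
  rw [hd1] at hrecR hrecC
  obtain ⟨S, hSdef⟩ : ∃ x : ℝ, x = ∑ j, C j := ⟨_, rfl⟩
  rw [← hSdef] at hrecR
  obtain ⟨T, hTdef⟩ : ∃ x : ℝ, x = ∑ i, R i := ⟨_, rfl⟩
  rw [← hTdef] at hrecC
  obtain ⟨E, hEdef⟩ : ∃ x : ℝ, x = 1 - B := ⟨_, rfl⟩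
  have hE0 : 0 < E := by simp only [hEdef]; linarith
  have hE1 : E ≤ 1 := by simp only [hEdef]; linarith
  have hq0 : (0:ℝ) < q := by exact_mod_cast (by omega : 0 < q)
  obtain ⟨Q, hQdef⟩ : ∃ x : ℝ, x = (q:ℝ) - E := ⟨_, rfl⟩
  have hQ0 : 0 < Q := by
    have : (3:ℝ) ≤ q := by exact_mod_cast hq
    simp only [hQdef]; linarith
  have hS0 : 0 < S := hSdef ▸ Finset.sum_pos (fun j _ => hC j) ⟨⟨0, by omega⟩, Finset.mem_univ _⟩
  have hT0 : 0 < T := hTdef ▸ Finset.sum_pos (fun j _ => hR j) ⟨⟨0, by omega⟩, Finset.mem_univ _⟩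
  have hEq : ((e:ℝ)+3) * E ≤ q := by
    have hΔ0 : (0:ℝ) < ((e:ℝ)+3) := by positivity
    have hcast : ((e + 3 : ℕ):ℝ) = (e:ℝ) + 3 := by push_cast; ring
    rw [hcast] at hBc
    rw [div_le_iff₀ hΔ0] at hBc
    simp only [hEdef]
    nlinarith
  have hSC : ∀ i, 0 < S - C i := by
    intro i
    have h := Finset.sum_erase_add Finset.univ C (Finset.mem_univ i)
    have hpos : 0 < ∑ j ∈ Finset.univ.erase i, C j := by
      apply Finset.sum_pos (fun j _ => hC j)
      have h1 : 1 < (Finset.univ : Finset (Fin q)).card := by simp; omega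
      exact (Finset.erase_nonempty (Finset.mem_univ i)).mpr
        (Finset.one_lt_card_iff_nontrivial.mp h1)
    rw [hSdef]; linarith
  have hTR : ∀ i, 0 < T - R i := by
    intro i
    have h := Finset.sum_erase_add Finset.univ R (Finset.mem_univ i)
    have hpos : 0 < ∑ j ∈ Finset.univ.erase i, R j := by
      apply Finset.sum_pos (fun j _ => hR j)
      have h1 : 1 < (Finset.univ : Finset (Fin q)).card := by simp; omega
      exact (Finset.erase_nonempty (Finset.mem_univ i)).mpr
        (Finset.one_lt_card_iff_nontrivial.mp h1)
    rw [hTdef]; linarith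
  obtain ⟨a, hadef⟩ : ∃ x : Fin q → ℝ, x = fun i => S - E * C i := ⟨_, rfl⟩
  obtain ⟨b, hbdef⟩ : ∃ x : Fin q → ℝ, x = fun i => T - E * R i := ⟨_, rfl⟩
  have ha0 : ∀ i, 0 < a i := by
    intro i
    have h1 := hSC i
    have h2 := hC i
    simp only [hadef, hEdef]
    nlinarith
  have hb0 : ∀ i, 0 < b i := by
    intro i
    have h1 := hTR i
    have h2 := hR i
    simp only [hbdef, hEdef]
    nlinarith
  have haR : ∀ i, R i = lam * (a i)^(e+2) := by
    intro i
    have h1 : a i = B * C i + (S - C i) := by simp only [hadef, hEdef]; ring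
    rw [h1]
    exact hrecR i
  have hbC : ∀ i, C i = mu * (b i)^(e+2) := by
    intro i
    have h1 : b i = B * R i + (T - R i) := by simp only [hbdef, hEdef]; ring
    rw [h1]
    exact hrecC i
  have hRconst : ∀ i j, R i = R j := by
    by_contra hcon
    push_neg at hcon
    obtain ⟨u, v, huv⟩ := hcon
    obtain ⟨i₀, -, hmin⟩ := Finset.exists_min_image Finset.univ R ⟨u, Finset.mem_univ u⟩
    obtain ⟨i₁, -, hmax⟩ := Finset.exists_max_image Finset.univ R ⟨u, Finset.mem_univ u⟩
    have hpr : R i₀ < R i₁ := by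
      rcases lt_or_ge (R i₀) (R i₁) with h | h
      · exact h
      · exfalso
        apply huv
        have h1 := hmin u (Finset.mem_univ u)
        have h2 := hmax u (Finset.mem_univ u)
        have h3 := hmin v (Finset.mem_univ v)
        have h4 := hmax v (Finset.mem_univ v)
        linarith
    -- distinctness of a's and b's
    have hbmm : b i₁ < b i₀ := by
      simp only [hbdef]
      nlinarith
    have hCmm : C i₁ < C i₀ := by
      rw [hbC i₀, hbC i₁]
      have := pow_lt_pow_left₀ hbmm (hb0 i₁).le (by omega : e + 2 ≠ 0)
      nlinarith
    have hamm : a i₀ < a i₁ := by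
      simp only [hadef]
      nlinarith
    -- sums
    have hsa : ∑ i, a i = Q * S := by
      simp only [hadef]
      rw [Finset.sum_sub_distrib, Finset.sum_const, Finset.card_univ, ← Finset.mul_sum]
      rw [← hSdef, hQdef]
      simp only [Fintype.card_fin, nsmul_eq_mul]
      ring
    have hsb : ∑ i, b i = Q * T := by
      simp only [hbdef]
      rw [Finset.sum_sub_distrib, Finset.sum_const, Finset.card_univ, ← Finset.mul_sum]
      rw [← hTdef, hQdef]
      simp only [Fintype.card_fin, nsmul_eq_mul]
      ring
    have hTsum : T = lam * ∑ i, (a i)^(e+2) := by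
      calc T = ∑ i, R i := hTdef
        _ = ∑ i, lam * (a i)^(e+2) := Finset.sum_congr rfl (fun i _ => haR i)
        _ = lam * ∑ i, (a i)^(e+2) := by rw [Finset.mul_sum]
    have hSsum : S = mu * ∑ i, (b i)^(e+2) := by
      calc S = ∑ j, C j := hSdef
        _ = ∑ i, mu * (b i)^(e+2) := Finset.sum_congr rfl (fun i _ => hbC i)
        _ = mu * ∑ i, (b i)^(e+2) := by rw [Finset.mul_sum]
    -- Jensen bounds
    have hA := potts_jensen q hq e lam Q S T hlam a ha0 hsa hTsum i₀ i₁ (ne_of_lt hamm)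
    have hB := potts_jensen q hq e mu Q T S hmu b hb0 hsb hSsum i₀ i₁ (ne_of_gt hbmm)
    -- fixed points of Φ
    have hfix : ∀ i, lam * (S - E * (mu * (T - E * R i)^(e+2)))^(e+2) = R i := by
      intro i
      have h1 : T - E * R i = b i := by rw [hbdef]
      rw [h1, ← hbC i]
      have h2 : S - E * C i = a i := by rw [hadef]
      rw [h2]
      exact (haR i).symm
    -- MVT
    obtain ⟨ξ, hmem, hKval0⟩ := potts_mvt e lam mu E S T (R i₀) (R i₁) hpr (hfix i₀) (hfix i₁)
    have hEξ1 : E * ξ < E * R i₁ := mul_lt_mul_of_pos_left hmem.2 hE0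
    have hEξ0 : E * R i₀ < E * ξ := mul_lt_mul_of_pos_left hmem.1 hE0
    obtain ⟨bb, hbbdef⟩ : ∃ x : ℝ, x = T - E * ξ := ⟨_, rfl⟩
    rw [← hbbdef] at hKval0
    have hbb0 : 0 < bb := by
      have hb1 := hb0 i₁
      rw [hbdef] at hb1
      simp only at hb1
      rw [hbbdef]
      linarith
    have hbbi0 : bb < b i₀ := by
      rw [hbdef]
      simp only
      rw [hbbdef]
      linarith
    obtain ⟨aa, haadef⟩ : ∃ x : ℝ, x = S - E * (mu * bb^(e+2)) := ⟨_, rfl⟩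
    rw [← haadef] at hKval0
    have haa0 : 0 < aa := by
      have h1 : mu * bb^(e+2) < C i₀ := by
        rw [hbC i₀]
        exact mul_lt_mul_of_pos_left
          (pow_lt_pow_left₀ hbbi0 hbb0.le (by omega : e + 2 ≠ 0)) hmu
      have h2 := hSC i₀
      have h3 := hC i₀
      have h4 : E * (mu * bb^(e+2)) < E * C i₀ := mul_lt_mul_of_pos_left h1 hE0
      have h5 : E * C i₀ ≤ 1 * C i₀ := mul_le_mul_of_nonneg_right hE1 h3.le
      rw [one_mul] at h5
      rw [haadef]
      linarith
    have hKval : ((e:ℝ)+2)^2 * E^2 * lam * mu * (aa^(e+1) * bb^(e+1)) = 1 := hKval0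
    -- AM-GM bound
    have hamgm := potts_amgm (e+2) (by omega) (E * (mu * bb^(e+2))) aa
      (by positivity) haa0.le
    have hIcast : ((e+2:ℕ):ℝ) = (e:ℝ)+2 := by push_cast; ring
    have hzs : E * (mu * bb^(e+2)) + aa = S := by rw [haadef]; ring
    have hI : ((e:ℝ)+3)^(e+3) * (E*mu*(aa^(e+2)*bb^(e+2))) ≤ ((e:ℝ)+2)^(e+2) * S^(e+3) := by
      have h1 : (((e+2:ℕ):ℝ)+1)^(e+2+1) * ((E * (mu * bb^(e+2))) * aa^(e+2))
          ≤ ((e+2:ℕ):ℝ)^(e+2) * ((E * (mu * bb^(e+2))) + aa)^(e+2+1) := hamgm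
      rw [hIcast, hzs] at h1
      calc ((e:ℝ)+3)^(e+3) * (E*mu*(aa^(e+2)*bb^(e+2)))
          = (((e:ℝ)+2)+1)^(e+2+1) * ((E * (mu * bb^(e+2))) * aa^(e+2)) := by ring
        _ ≤ ((e:ℝ)+2)^(e+2) * S^(e+2+1) := h1
        _ = ((e:ℝ)+2)^(e+2) * S^(e+3) := by ring
    -- threshold
    have hth : ((e:ℝ)+2) * q ≤ ((e:ℝ)+3) * Q := by
      simp only [hQdef]
      have h := hEq
      ring_nf
      ring_nf at h
      linarith
    -- final contradiction
    have hfinal := potts_final e ((e:ℝ)+2) ((e:ℝ)+3) E lam mu aa bb S T Q (q:ℝ)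
      (by positivity) (by positivity) hE0 hlam hmu haa0 hbb0 hS0 hT0 hQ0 hq0
      hI hA hB hth hEq
    have hKpow : (((e:ℝ)+2)^2 * E^2 * lam * mu * (aa*bb)^(e+1))^(e+2) = 1 := by
      rw [mul_pow aa bb]
      rw [hKval]
      exact one_pow _
    rw [hKpow] at hfinal
    exact lt_irrefl 1 hfinal
  refine ⟨hRconst, fun i j => ?_⟩
  rw [hrecC i, hrecC j, hRconst i j]
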